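/- arXiv:2108.08843 — 11 statements merged into one kernel-verified Lean document; each statement's English description precedes it below -/
import Mathlib

section
/- If a market outcome (X, τ) with zero-sum transfers is stable (individually rational and has no blocking pairs), then X is a maximum weight matching, i.e., X maximizes the sum over all agents a of u_a(μ_X(a)) over all matchings on the agents. -/
open Finset

/-- A two-sided market: agents `A` partitioned into customers `M` and providers `W`. -/
structure TwoSidedMarket (A : Type*) [Fintype A] [DecidableEq A] where
  M : Finset A
  W : Finset A
  disj : Disjoint M W
  cover : M ∪ W = Finset.univ

variable {A : Type*} [Fintype A] [DecidableEq A]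

/-- `μ` is (the partner map of) a matching on the subset `S` of agents:
it is an involution, agents outside `S` are unmatched, and matched pairs cross sides. -/
def IsMatchingOn (Mkt : TwoSidedMarket A) (S : Finset A) (μ : A → A) : Prop :=
  (∀ a, μ (μ a) = a) ∧ (∀ a, μ a ≠ a → a ∈ S) ∧
  (∀ a, μ a ≠ a → (a ∈ Mkt.M ∧ μ a ∈ Mkt.W) ∨ (a ∈ Mkt.W ∧ μ a ∈ Mkt.M))

/-- Transfers `τ` are zero-sum for the matching `μ`. -/
def ZeroSum (μ : A → A) (τ : A → ℝ) : Prop :=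
  (∀ a, μ a ≠ a → τ a + τ (μ a) = 0) ∧ (∀ a, μ a = a → τ a = 0)

/-- Stability of the market outcome `(μ, τ)` with respect to utilities `u`:
individual rationality and no blocking pairs. -/
def Stable (Mkt : TwoSidedMarket A) (u : A → A → ℝ) (μ : A → A) (τ : A → ℝ) : Prop :=
  (∀ a, 0 ≤ u a (μ a) + τ a) ∧
  (∀ m ∈ Mkt.M, ∀ w ∈ Mkt.W,
    u m w + u w m ≤ (u m (μ m) + τ m) + (u w (μ w) + τ w))

/-- Maximum total utility of a matching on the subset `S`. -/
noncomputable def maxWeight (Mkt : TwoSidedMarket A) (u : A → A → ℝ) (S : Finset A) : ℝ :=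
  sSup {x | ∃ μ, IsMatchingOn Mkt S μ ∧ x = ∑ a ∈ S, u a (μ a)}

/-- Subset Instability of the market outcome `(μ, τ)` with respect to utilities `u`. -/
noncomputable def instability (Mkt : TwoSidedMarket A) (u : A → A → ℝ)
    (μ : A → A) (τ : A → ℝ) : ℝ :=
  sSup {x | ∃ S : Finset A, x = maxWeight Mkt u S - ∑ a ∈ S, (u a (μ a) + τ a)}

/-- a stable outcome with zero-sum transfers has a maximum weight matching. -/
theorem stable_implies_max_weight
    (Mkt : TwoSidedMarket A) (u : A → A → ℝ) (μ : A → A) (τ : A → ℝ)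
    (hu : ∀ a, u a a = 0)
    (hμ : IsMatchingOn Mkt Finset.univ μ)
    (hτ : ZeroSum μ τ)
    (hstable : Stable Mkt u μ τ) :
    ∀ μ' : A → A, IsMatchingOn Mkt Finset.univ μ' →
      ∑ a, u a (μ' a) ≤ ∑ a, u a (μ a) := by

  intro μ' hμ'
  obtain ⟨hinv', -, hside'⟩ := hμ'
  obtain ⟨hinv, -, -⟩ := hμ
  obtain ⟨hIR, hNB⟩ := hstable
  obtain ⟨hzs1, hzs2⟩ := hτ
  have hcomp : ∀ (ν : A → A), (∀ a, ν (ν a) = a) → ∀ f : A → ℝ,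
      ∑ a, f (ν a) = ∑ a, f a := fun ν hν f =>
    Function.Bijective.sum_comp (Function.Involutive.bijective hν) f
  -- sum of transfers is zero
  have hτsum : ∑ a, τ a = 0 := by
    have h2 : ∑ a, (τ a + τ (μ a)) = 0 := by
      apply Finset.sum_eq_zero
      intro a _
      by_cases h : μ a = a
      · rw [h]; have := hzs2 a h; linarith
      · exact hzs1 a h
    rw [Finset.sum_add_distrib, hcomp μ hinv τ] at h2
    linarith
  set g : A → ℝ := fun a => u a (μ a) + τ a with hg
  have key : ∀ a, u a (μ' a) + u (μ' a) a ≤ g a + g (μ' a) := by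
    intro a
    by_cases h : μ' a = a
    · rw [h, hu a]
      have := hIR a
      simp only [hg]
      linarith
    · rcases hside' a h with ⟨hm, hw⟩ | ⟨hw, hm⟩
      · exact hNB a hm (μ' a) hw
      · have := hNB (μ' a) hm a hw
        simp only [hg]
        linarith
  have hsum2 : ∑ a, (u a (μ' a) + u (μ' a) a) ≤ ∑ a, (g a + g (μ' a)) :=
    Finset.sum_le_sum fun a _ => key a
  have hl : ∑ a, (u a (μ' a) + u (μ' a) a) = 2 * ∑ a, u a (μ' a) := by
    rw [Finset.sum_add_distrib]
    have : ∑ a, u (μ' a) a = ∑ a, u a (μ' a) := by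
      have := hcomp μ' hinv' (fun a => u a (μ' a))
      simp only [hinv'] at this
      rw [← this]
    rw [this]; ring
  have hr : ∑ a, (g a + g (μ' a)) = 2 * ∑ a, g a := by
    rw [Finset.sum_add_distrib, hcomp μ' hinv' g]; ring
  have hgsum : ∑ a, g a = ∑ a, u a (μ a) := by
    simp only [hg, Finset.sum_add_distrib, hτsum, add_zero]
  rw [hl, hr, hgsum] at hsum2
  linarith
end

section
/- A market outcome (X, τ) with zero-sum transfers is stable if and only if its Subset Instability I(u, X, τ, A) equals zero. -/
open Finset

variable {A : Type*} [Fintype A] [DecidableEq A]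

lemma matching_id (Mkt : TwoSidedMarket A) (S : Finset A) : IsMatchingOn Mkt S id :=
  ⟨fun _ => rfl, fun _ h => absurd rfl h, fun _ h => absurd rfl h⟩

lemma maxWeight_bddAbove (Mkt : TwoSidedMarket A) (u : A → A → ℝ) (S : Finset A) :
    BddAbove {x | ∃ μ, IsMatchingOn Mkt S μ ∧ x = ∑ a ∈ S, u a (μ a)} := by
  apply Set.Finite.bddAbove
  apply Set.Finite.subset (Set.finite_range (fun μ' : A → A => ∑ a ∈ S, u a (μ' a)))
  rintro x ⟨μ', _, rfl⟩; exact ⟨μ', rfl⟩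

lemma inst_bddAbove (Mkt : TwoSidedMarket A) (u : A → A → ℝ) (μ : A → A) (τ : A → ℝ) :
    BddAbove {x | ∃ S : Finset A, x = maxWeight Mkt u S - ∑ a ∈ S, (u a (μ a) + τ a)} := by
  apply Set.Finite.bddAbove
  apply Set.Finite.subset
    (Set.finite_range (fun S : Finset A => maxWeight Mkt u S - ∑ a ∈ S, (u a (μ a) + τ a)))
  rintro x ⟨S, rfl⟩; exact ⟨S, rfl⟩

lemma le_maxWeight (Mkt : TwoSidedMarket A) (u : A → A → ℝ) (S : Finset A) {μ' : A → A}
    (h : IsMatchingOn Mkt S μ') : ∑ a ∈ S, u a (μ' a) ≤ maxWeight Mkt u S :=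
  le_csSup (maxWeight_bddAbove Mkt u S) ⟨μ', h, rfl⟩

lemma maxWeight_le (Mkt : TwoSidedMarket A) (u : A → A → ℝ) (S : Finset A) {c : ℝ}
    (h : ∀ μ', IsMatchingOn Mkt S μ' → ∑ a ∈ S, u a (μ' a) ≤ c) :
    maxWeight Mkt u S ≤ c := by
  refine csSup_le ⟨_, ⟨id, matching_id Mkt S, rfl⟩⟩ ?_
  rintro x ⟨μ', hμ', rfl⟩; exact h μ' hμ'

lemma stable_sum_le (Mkt : TwoSidedMarket A) (u : A → A → ℝ) (μ : A → A) (τ : A → ℝ)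
    (hu : ∀ a, u a a = 0) (hs : Stable Mkt u μ τ)
    (S : Finset A) {σ : A → A} (hσ : IsMatchingOn Mkt S σ) :
    ∑ a ∈ S, u a (σ a) ≤ ∑ a ∈ S, (u a (μ a) + τ a) := by
  obtain ⟨hinv, hmem, hside⟩ := hσ
  set g : A → ℝ := fun a => u a (σ a) - (u a (μ a) + τ a) with hg
  have hmap : ∀ a ∈ S, σ a ∈ S := by
    intro a ha
    by_cases h : σ a = a
    · rwa [h]
    · refine hmem (σ a) ?_
      rw [hinv a]
      exact fun h' => h h'.symm
  have hperm : ∑ a ∈ S, g (σ a) = ∑ a ∈ S, g a := by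
    refine Finset.sum_nbij' σ σ hmap hmap (fun a _ => hinv a) (fun a _ => hinv a) ?_
    intro a _; rfl
  have hpair : ∀ a ∈ S, g a + g (σ a) ≤ 0 := by
    intro a _
    by_cases h : σ a = a
    · have h1 := hs.1 a
      simp only [hg, h, hu a]
      linarith
    · have hfix : σ (σ a) = a := hinv a
      rcases hside a h with ⟨haM, hbW⟩ | ⟨haW, hbM⟩
      · have h2 := hs.2 a haM (σ a) hbW
        simp only [hg, hfix]
        linarith
      · have h2 := hs.2 (σ a) hbM a haW
        simp only [hg, hfix]
        linarith
  have h2 : ∑ a ∈ S, (g a + g (σ a)) ≤ 0 := Finset.sum_nonpos hpair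
  rw [Finset.sum_add_distrib, hperm] at h2
  have h3 : ∑ a ∈ S, g a ≤ 0 := by linarith
  have h4 : ∑ a ∈ S, g a = ∑ a ∈ S, u a (σ a) - ∑ a ∈ S, (u a (μ a) + τ a) := by
    simp [hg, Finset.sum_sub_distrib]
  linarith

lemma maxWeight_empty (Mkt : TwoSidedMarket A) (u : A → A → ℝ) :
    maxWeight Mkt u (∅ : Finset A) = 0 := by
  have : {x : ℝ | ∃ μ, IsMatchingOn Mkt (∅ : Finset A) μ ∧ x = ∑ a ∈ (∅ : Finset A), u a (μ a)}
      = {0} := by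
    ext x
    simp only [Set.mem_setOf_eq, Finset.sum_empty, Set.mem_singleton_iff]
    constructor
    · rintro ⟨μ', _, rfl⟩; rfl
    · rintro rfl; exact ⟨id, matching_id Mkt ∅, rfl⟩
  rw [maxWeight, this, csSup_singleton]

/-- an outcome with zero-sum transfers is stable iff its Subset Instability is zero. -/
theorem stable_iff_instability_eq_zero
    (Mkt : TwoSidedMarket A) (u : A → A → ℝ) (μ : A → A) (τ : A → ℝ)
    (hu : ∀ a, u a a = 0)
    (hμ : IsMatchingOn Mkt Finset.univ μ)
    (hτ : ZeroSum μ τ) :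
    Stable Mkt u μ τ ↔ instability Mkt u μ τ = 0 := by
  constructor
  · intro hs
    apply le_antisymm
    · refine csSup_le ⟨_, ⟨∅, rfl⟩⟩ ?_
      rintro x ⟨S, rfl⟩
      have h1 : maxWeight Mkt u S ≤ ∑ a ∈ S, (u a (μ a) + τ a) :=
        maxWeight_le Mkt u S (fun σ hσ => stable_sum_le Mkt u μ τ hu hs S hσ)
      linarith
    · apply le_csSup (inst_bddAbove Mkt u μ τ)
      refine ⟨∅, ?_⟩
      simp [maxWeight_empty Mkt u]
  · intro h0
    have hub : ∀ S : Finset A, maxWeight Mkt u S ≤ ∑ a ∈ S, (u a (μ a) + τ a) := by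
      intro S
      have h1 : maxWeight Mkt u S - ∑ a ∈ S, (u a (μ a) + τ a) ≤ instability Mkt u μ τ :=
        le_csSup (inst_bddAbove Mkt u μ τ) ⟨S, rfl⟩
      rw [h0] at h1; linarith
    constructor
    · intro a
      have h1 : (0:ℝ) ≤ maxWeight Mkt u {a} := by
        have h2 := le_maxWeight Mkt u {a} (matching_id Mkt {a})
        simpa [hu] using h2
      have h2 := hub {a}
      simp only [Finset.sum_singleton] at h2
      linarith
    · intro m hm w hw
      have hmw : m ≠ w := fun h => (Finset.disjoint_left.mp Mkt.disj hm) (h ▸ hw)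
      have hne : ∀ a : A, Equiv.swap m w a ≠ a → a = m ∨ a = w := by
        intro a ha
        by_contra hna
        push_neg at hna
        exact ha (Equiv.swap_apply_of_ne_of_ne hna.1 hna.2)
      have hσ : IsMatchingOn Mkt {m, w} (Equiv.swap m w) := by
        refine ⟨fun a => Equiv.swap_apply_self _ _ _, ?_, ?_⟩
        · intro a ha
          rcases hne a ha with rfl | rfl <;> simp
        · intro a ha
          rcases hne a ha with rfl | rfl
          · rw [Equiv.swap_apply_left]; exact Or.inl ⟨hm, hw⟩
          · rw [Equiv.swap_apply_right]; exact Or.inr ⟨hw, hm⟩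
      have h1 := le_maxWeight Mkt u {m, w} hσ
      rw [Finset.sum_pair hmw, Equiv.swap_apply_left, Equiv.swap_apply_right] at h1
      have h2 := hub {m, w}
      rw [Finset.sum_pair hmw] at h2
      linarith
end

section
/- If the nonnegative subsidy vector s ∈ ℝ^A_{≥0} is such that the subsidized outcome (X, τ + s) is stable (individually rational and without blocking pairs), then the Subset Instability of (X, τ) is at most Σ_{a∈A} s_a. -/
open Finset

variable {A : Type*} [Fintype A] [DecidableEq A]

/-- if subsidies `s ≥ 0` make `(X, τ + s)` stable, then
Subset Instability is at most the total subsidy. -/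
theorem instability_le_total_subsidy
    (Mkt : TwoSidedMarket A) (u : A → A → ℝ) (μ : A → A) (τ : A → ℝ) (s : A → ℝ)
    (hu : ∀ a, u a a = 0)
    (hμ : IsMatchingOn Mkt Finset.univ μ)
    (hτ : ZeroSum μ τ)
    (hs : ∀ a, 0 ≤ s a)
    (hstable : Stable Mkt u μ (fun a => τ a + s a)) :
    instability Mkt u μ τ ≤ ∑ a, s a := by
  have hv : ∀ a, 0 ≤ u a (μ a) + τ a + s a := by
    intro a; have := hstable.1 a; simpa [add_assoc] using this
  have hssum : ∀ S : Finset A, ∑ a ∈ S, s a ≤ ∑ a, s a := fun S =>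
    Finset.sum_le_sum_of_subset_of_nonneg (Finset.subset_univ S) (fun a _ _ => hs a)
  -- key lemma: any matching on S has weight at most ∑_S (u + τ + s)
  have key : ∀ (S : Finset A) (μ' : A → A), IsMatchingOn Mkt S μ' →
      ∑ a ∈ S, u a (μ' a) ≤ ∑ a ∈ S, (u a (μ a) + τ a + s a) := by
    intro S μ' hμ'
    obtain ⟨hinv, hsupp, hcross⟩ := hμ'
    set v : A → ℝ := fun a => u a (μ a) + τ a + s a with hvdef
    set g : A → ℝ := fun a => u a (μ' a) - v a with hgdef
    have hsum : ∑ a ∈ S, g a = ∑ a ∈ S, u a (μ' a) - ∑ a ∈ S, v a := by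
      simp [hgdef, Finset.sum_sub_distrib]
    suffices h : ∑ a ∈ S, g a ≤ 0 by
      have h2 : ∑ a ∈ S, v a = ∑ a ∈ S, (u a (μ a) + τ a + s a) := rfl
      linarith [hsum, h2]
    have hsplit := Finset.sum_filter_add_sum_filter_not S (fun a => μ' a = a) g
    set T := S.filter (fun a => ¬ μ' a = a) with hT
    have hfix : ∑ a ∈ S.filter (fun a => μ' a = a), g a ≤ 0 := by
      apply Finset.sum_nonpos
      intro a ha
      obtain ⟨haS, hfa⟩ := Finset.mem_filter.mp ha
      have : g a = - v a := by simp [hgdef, hfa, hu a]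
      have hva : 0 ≤ v a := hv a
      rw [this]
      linarith
    -- pair bound
    have hpair : ∀ a ∈ T, g a + g (μ' a) ≤ 0 := by
      intro a ha
      obtain ⟨haS, hne⟩ := Finset.mem_filter.mp ha
      have hga : g a + g (μ' a)
          = u a (μ' a) + u (μ' a) a - v a - v (μ' a) := by
        simp [hgdef, hinv a]; ring
      have hva : v a = u a (μ a) + τ a + s a := rfl
      have hvb : v (μ' a) = u (μ' a) (μ (μ' a)) + τ (μ' a) + s (μ' a) := rfl
      rcases hcross a hne with ⟨hM, hW⟩ | ⟨hW, hM⟩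
      · have := hstable.2 a hM (μ' a) hW
        dsimp only at this
        rw [hga]; linarith
      · have := hstable.2 (μ' a) hM a hW
        dsimp only at this
        rw [hga]; linarith
    -- μ' is an involution on T
    have hmapT : ∀ a ∈ T, μ' a ∈ T := by
      intro a ha
      obtain ⟨haS, hne⟩ := Finset.mem_filter.mp ha
      have hne' : μ' (μ' a) ≠ μ' a := by rw [hinv a]; exact fun h => hne h.symm
      exact Finset.mem_filter.mpr ⟨hsupp (μ' a) hne', hne'⟩
    have hperm : ∑ a ∈ T, g (μ' a) = ∑ a ∈ T, g a := by
      apply Finset.sum_nbij' (i := fun a => μ' a) (j := fun a => μ' a)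
      · exact hmapT
      · exact hmapT
      · intro a _; exact hinv a
      · intro a _; exact hinv a
      · intro a _; rfl
    have hTle : ∑ a ∈ T, g a ≤ 0 := by
      have h2 : (2 : ℝ) * ∑ a ∈ T, g a = ∑ a ∈ T, (g a + g (μ' a)) := by
        rw [Finset.sum_add_distrib, hperm]; ring
      have h3 : ∑ a ∈ T, (g a + g (μ' a)) ≤ 0 := Finset.sum_nonpos hpair
      linarith
    linarith [hsplit, hfix, hTle]
  apply Real.sSup_le
  · rintro x ⟨S, rfl⟩
    have hbound : maxWeight Mkt u S ≤ ∑ a ∈ S, (u a (μ a) + τ a) + ∑ a, s a := by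
      have hsplit : ∑ a ∈ S, (u a (μ a) + τ a + s a)
          = ∑ a ∈ S, (u a (μ a) + τ a) + ∑ a ∈ S, s a := by
        rw [← Finset.sum_add_distrib]
      apply Real.sSup_le
      · rintro x ⟨μ', hμ', rfl⟩
        have := key S μ' hμ'
        linarith [hssum S]
      · have h1 : 0 ≤ ∑ a ∈ S, (u a (μ a) + τ a + s a) :=
          Finset.sum_nonneg (fun a _ => hv a)
        linarith [hssum S]
    linarith
  · exact Finset.sum_nonneg fun a _ => hs a
end

section
/- Main confidence-set lemma: Suppose confidence intervals C_{a,a'} ⊆ ℝ contain the true utilities, i.e., u_m(w) ∈ C_{m,w} and u_w(m) ∈ C_{w,m} for all (m,w) ∈ M × W, and let u^UCB(a,a') = max C_{a,a'}. If (X, τ) is stable with respect to u^UCB (with zero-sum transfers), then the Subset Instability of (X, τ) with respect to the true utilities u satisfies I(u, X, τ, A) ≤ Σ_{a∈A, μ_X(a)≠a} (max C_{a,μ_X(a)} − min C_{a,μ_X(a)}). -/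
open Finset

variable {A : Type*} [Fintype A] [DecidableEq A]

/-- if confidence sets contain the true utilities and `(X, τ)` is stable
with respect to the upper-confidence-bound utilities, then the Subset Instability with
respect to the true utilities is at most the total width of the confidence sets along `X`. -/
theorem instability_le_confidence_widths
    (Mkt : TwoSidedMarket A) (u v : A → A → ℝ) (μ : A → A) (τ : A → ℝ)
    (C : A → A → Set ℝ)
    (hC : ∀ a a', (C a a').Nonempty ∧ IsCompact (C a a'))
    (hmem : ∀ m ∈ Mkt.M, ∀ w ∈ Mkt.W, u m w ∈ C m w ∧ u w m ∈ C w m)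
    (hu : ∀ a, u a a = 0)
    (hv : ∀ a a', a ≠ a' → v a a' = sSup (C a a'))
    (hvdiag : ∀ a, v a a = 0)
    (hμ : IsMatchingOn Mkt Finset.univ μ)
    (hτ : ZeroSum μ τ)
    (hstable : Stable Mkt v μ τ) :
    instability Mkt u μ τ ≤
      ∑ a ∈ Finset.univ.filter (fun a => μ a ≠ a),
        (sSup (C a (μ a)) - sInf (C a (μ a))) := by
  classical
  set B := ∑ a ∈ Finset.univ.filter (fun a => μ a ≠ a),
      (sSup (C a (μ a)) - sInf (C a (μ a))) with hBdef
  -- membership of true utilities along cross-side pairs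
  have hmem' : ∀ a b, ((a ∈ Mkt.M ∧ b ∈ Mkt.W) ∨ (a ∈ Mkt.W ∧ b ∈ Mkt.M)) →
      u a b ∈ C a b := by
    rintro a b (⟨ha, hb⟩ | ⟨ha, hb⟩)
    · exact (hmem a ha b hb).1
    · exact (hmem b hb a ha).2
  have hwidth : ∀ a ∈ Finset.univ.filter (fun a => μ a ≠ a),
      0 ≤ sSup (C a (μ a)) - sInf (C a (μ a)) := by
    intro a _
    have h := csInf_le_csSup (hC a (μ a)).1 (hC a (μ a)).2.bddBelow (hC a (μ a)).2.bddAbove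
    linarith
  have hB0 : 0 ≤ B := Finset.sum_nonneg hwidth
  apply Real.sSup_le _ hB0
  rintro x ⟨S, rfl⟩
  rw [sub_le_iff_le_add, maxWeight]
  apply csSup_le
  · exact ⟨∑ a ∈ S, u a (id a), id, ⟨fun a => rfl, fun a h => absurd rfl h,
      fun a h => absurd rfl h⟩, rfl⟩
  rintro x ⟨μ', hμ', rfl⟩
  obtain ⟨hinv, hS, hcross⟩ := hμ'
  -- σ maps S into S
  have hσS : ∀ a ∈ S, μ' a ∈ S := by
    intro a ha
    by_cases h : μ' a = a
    · rwa [h]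
    · have : μ' (μ' a) ≠ μ' a := by rw [hinv a]; exact fun e => h e.symm
      exact hS _ this
  -- step 1 : true utilities ≤ UCB utilities along μ'
  have step1 : ∑ a ∈ S, u a (μ' a) ≤ ∑ a ∈ S, v a (μ' a) := by
    apply Finset.sum_le_sum
    intro a _
    by_cases h : μ' a = a
    · rw [h, hu, hvdiag]
    · rw [hv a (μ' a) (fun e => h e.symm)]
      exact le_csSup (hC a (μ' a)).2.bddAbove (hmem' a (μ' a) (hcross a h))
  -- step 2 : UCB value of μ' ≤ UCB value of μ plus transfers, by stability
  have step2 : ∑ a ∈ S, v a (μ' a) ≤ ∑ a ∈ S, (v a (μ a) + τ a) := by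
    have pair : ∀ a ∈ S, v a (μ' a) + v (μ' a) (μ' (μ' a)) ≤
        (v a (μ a) + τ a) + (v (μ' a) (μ (μ' a)) + τ (μ' a)) := by
      intro a _
      by_cases h : μ' a = a
      · rw [hinv a, h, hvdiag]
        have := hstable.1 a
        linarith
      · rw [hinv a]
        rcases hcross a h with ⟨ha, hb⟩ | ⟨ha, hb⟩
        · exact hstable.2 a ha (μ' a) hb
        · have := hstable.2 (μ' a) hb a ha
          linarith
    have hsum : ∑ a ∈ S, (v a (μ' a) + v (μ' a) (μ' (μ' a))) ≤
        ∑ a ∈ S, ((v a (μ a) + τ a) + (v (μ' a) (μ (μ' a)) + τ (μ' a))) :=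
      Finset.sum_le_sum pair
    have e1 : ∑ a ∈ S, v (μ' a) (μ' (μ' a)) = ∑ a ∈ S, v a (μ' a) :=
      Finset.sum_nbij' (i := μ') (j := μ') hσS hσS
        (fun a _ => hinv a) (fun a _ => hinv a) (fun a _ => rfl)
    have e2 : ∑ a ∈ S, (v (μ' a) (μ (μ' a)) + τ (μ' a)) =
        ∑ a ∈ S, (v a (μ a) + τ a) :=
      Finset.sum_nbij' (i := μ') (j := μ') hσS hσS
        (fun a _ => hinv a) (fun a _ => hinv a) (fun a _ => rfl)
    rw [Finset.sum_add_distrib, Finset.sum_add_distrib, e1, e2] at hsum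
    linarith
  -- step 3 : the gap between UCB and true values along μ is at most B
  have step3 : ∑ a ∈ S, (v a (μ a) + τ a) ≤ B + ∑ a ∈ S, (u a (μ a) + τ a) := by
    have key : ∑ a ∈ S, (v a (μ a) - u a (μ a)) ≤ B := by
      have hz : ∑ a ∈ S, (v a (μ a) - u a (μ a)) =
          ∑ a ∈ S.filter (fun a => μ a ≠ a), (v a (μ a) - u a (μ a)) := by
        rw [Finset.sum_filter]
        apply Finset.sum_congr rfl
        intro a _
        by_cases h : μ a = a
        · simp [h, hu, hvdiag]
        · simp [h]
      rw [hz, hBdef]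
      have hsub : S.filter (fun a => μ a ≠ a) ⊆
          Finset.univ.filter (fun a => μ a ≠ a) := by
        intro a ha
        simp only [Finset.mem_filter] at ha ⊢
        exact ⟨Finset.mem_univ a, ha.2⟩
      refine le_trans (Finset.sum_le_sum ?_)
        (Finset.sum_le_sum_of_subset_of_nonneg hsub (fun a ha _ => hwidth a ha))
      intro a ha
      simp only [Finset.mem_filter] at ha
      have h := ha.2
      have hmemu : u a (μ a) ∈ C a (μ a) := hmem' a (μ a) (hμ.2.2 a h)
      have h1 : v a (μ a) = sSup (C a (μ a)) := hv a (μ a) (fun e => h e.symm)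
      have h2 : sInf (C a (μ a)) ≤ u a (μ a) :=
        csInf_le (hC a (μ a)).2.bddBelow hmemu
      linarith
    have expand : ∑ a ∈ S, (v a (μ a) + τ a) =
        ∑ a ∈ S, (u a (μ a) + τ a) + ∑ a ∈ S, (v a (μ a) - u a (μ a)) := by
      rw [← Finset.sum_add_distrib]
      apply Finset.sum_congr rfl
      intro a _
      ring
    rw [expand]
    linarith
  linarith
end

section
/- If (Z, p) is an optimal primal-dual pair for the matching LP and its dual with Z an integral matching indicator, then the market outcome (X, τ) with X the matching given by Z and transfers τ_a = p_a − u_a(μ_X(a)) for matched a and τ_a = 0 for unmatched a is a stable matching with zero-sum transfers. -/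
open Finset

variable {A : Type*} [Fintype A] [DecidableEq A]

/-- an optimal primal-dual pair, with the primal being the indicator of a
matching `μ`, yields a stable outcome with zero-sum transfers `τ_a = p_a - u_a(μ(a))`. -/
theorem primal_dual_optimal_gives_stable
    (Mkt : TwoSidedMarket A) (u : A → A → ℝ) (μ : A → A) (p : A → ℝ)
    (hu : ∀ a, u a a = 0)
    (hμ : IsMatchingOn Mkt Finset.univ μ)
    (hp0 : ∀ a, 0 ≤ p a)
    (hpfeas : ∀ m ∈ Mkt.M, ∀ w ∈ Mkt.W, u m w + u w m ≤ p m + p w)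
    (hopt : ∑ a, p a = ∑ a, u a (μ a)) :
    ZeroSum μ (fun a => if μ a = a then 0 else p a - u a (μ a)) ∧
      Stable Mkt u μ (fun a => if μ a = a then 0 else p a - u a (μ a)) := by
  obtain ⟨hinv, -, hside⟩ := hμ
  set d : A → ℝ := fun a => p a - u a (μ a) with hd
  set f : A → ℝ := fun a => d a + d (μ a) with hf
  have hfnn : ∀ a, 0 ≤ f a := by
    intro a
    by_cases h : μ a = a
    · simp only [hf, hd, h, hu a]
      have := hp0 a; linarith
    · rcases hside a h with ⟨hM, hW⟩ | ⟨hW, hM⟩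
      · have := hpfeas a hM (μ a) hW
        simp only [hf, hd, hinv a]; linarith
      · have := hpfeas (μ a) hM a hW
        simp only [hf, hd, hinv a]; linarith
  have e : Equiv.Perm A := Function.Involutive.toPerm μ hinv
  have hsum2 : ∑ a, d (μ a) = ∑ a, d a :=
    Fintype.sum_equiv (Function.Involutive.toPerm μ hinv) _ _ (fun a => rfl)
  have hsumd : ∑ a, d a = 0 := by
    simp only [hd, Finset.sum_sub_distrib, hopt, sub_self]
  have hsumf : ∑ a, f a = 0 := by
    simp only [hf, Finset.sum_add_distrib, hsum2, hsumd]; ring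
  have hf0 : ∀ a, f a = 0 := by
    intro a
    have := (Finset.sum_eq_zero_iff_of_nonneg (fun a _ => hfnn a)).mp hsumf
    exact this a (Finset.mem_univ a)
  -- key facts
  have hunm : ∀ a, μ a = a → p a = 0 := by
    intro a h
    have := hf0 a
    simp only [hf, hd, h, hu a] at this
    linarith
  have hmat : ∀ a, μ a ≠ a → d a + d (μ a) = 0 := fun a _ => hf0 a
  have hpa : ∀ a, u a (μ a) + (if μ a = a then 0 else p a - u a (μ a)) = p a := by
    intro a
    by_cases h : μ a = a
    · simp [h, hu a, hunm a h]
    · simp [h]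
  refine ⟨⟨?_, ?_⟩, ?_, ?_⟩
  · intro a ha
    have h2 : μ (μ a) ≠ μ a := by
      rw [hinv a]; exact fun h => ha h.symm
    have := hmat a ha
    simp only [hd, hinv a] at this
    simp only []
    rw [if_neg ha, if_neg h2, hinv a]
    linarith
  · intro a ha; simp [ha]
  · intro a
    rw [hpa a]; exact hp0 a
  · intro m hm w hw
    rw [hpa m, hpa w]
    exact hpfeas m hm w hw
end

section
/- If (X, τ) is a stable matching with zero-sum transfers, then setting p_a = τ_a + u_a(μ_X(a)) for all a ∈ A gives a feasible dual solution to (D) whose objective value Σ_{a∈A} p_a equals the primal objective value of the indicator of X, so (X, p) is an optimal primal-dual pair. -/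
open Finset

variable {A : Type*} [Fintype A] [DecidableEq A]

/-- a stable outcome with zero-sum transfers gives a feasible dual solution
`p_a = τ_a + u_a(μ(a))` whose objective equals the primal objective of the matching. -/
theorem stable_gives_optimal_primal_dual
    (Mkt : TwoSidedMarket A) (u : A → A → ℝ) (μ : A → A) (τ : A → ℝ)
    (hu : ∀ a, u a a = 0)
    (hμ : IsMatchingOn Mkt Finset.univ μ)
    (hτ : ZeroSum μ τ)
    (hstable : Stable Mkt u μ τ) :
    (∀ a, 0 ≤ τ a + u a (μ a)) ∧
    (∀ m ∈ Mkt.M, ∀ w ∈ Mkt.W,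
      u m w + u w m ≤ (τ m + u m (μ m)) + (τ w + u w (μ w))) ∧
    (∑ a, (τ a + u a (μ a))) = ∑ a, u a (μ a) := by
  refine ⟨fun a => by linarith [hstable.1 a], fun m hm w hw => by
    linarith [hstable.2 m hm w hw], ?_⟩
  have hsum : ∑ a, τ a = 0 := by
    refine Finset.sum_involution (fun a _ => μ a) ?_ ?_ (fun a _ => Finset.mem_univ _)
      (fun a _ => hμ.1 a)
    · intro a _
      by_cases h : μ a = a
      · simp only [h, hτ.2 a h]; ring
      · exact hτ.1 a h
    · intro a _ h
      intro heq
      exact h (hτ.2 a heq)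
  rw [Finset.sum_add_distrib, hsum, zero_add]
end

section
/- Suppose every confidence interval contains the true utility and u^UCB denotes the upper endpoints. If X^UCB is a maximum weight matching with respect to u^UCB and the total width of confidence intervals along X^UCB is at most 0.1·Δ, where Δ is the gap between the best and second-best matchings under the true utilities u, then X^UCB equals the (unique) maximum weight matching with respect to u. -/
open Finset

variable {A : Type*} [Fintype A] [DecidableEq A]

/-- if the total width of the confidence intervals along the UCB-optimal
matching is at most `0.1 Δ`, the UCB-optimal matching is the true optimal matching. -/
theorem ucb_matching_eq_true_opt
    (Mkt : TwoSidedMarket A) (u v : A → A → ℝ) (C : A → A → Set ℝ)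
    (μopt μucb : A → A)
    (hu : ∀ a, u a a = 0)
    (hC : ∀ a a', (C a a').Nonempty ∧ IsCompact (C a a'))
    (hmem : ∀ a a', u a a' ∈ C a a')
    (hv : ∀ a a', a ≠ a' → v a a' = sSup (C a a'))
    (hvdiag : ∀ a, v a a = 0)
    (hopt : IsMatchingOn Mkt Finset.univ μopt)
    (hunique : ∀ μ', IsMatchingOn Mkt Finset.univ μ' → μ' ≠ μopt →
      ∑ a, u a (μ' a) < ∑ a, u a (μopt a))
    (Δ : ℝ)
    (hΔ : Δ = sInf {x | ∃ μ', IsMatchingOn Mkt Finset.univ μ' ∧ μ' ≠ μopt ∧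
        x = ∑ a, u a (μopt a) - ∑ a, u a (μ' a)})
    (hΔpos : 0 < Δ)
    (hucb : IsMatchingOn Mkt Finset.univ μucb)
    (hucbmax : ∀ μ', IsMatchingOn Mkt Finset.univ μ' →
      ∑ a, v a (μ' a) ≤ ∑ a, v a (μucb a))
    (hwidth : ∑ a ∈ Finset.univ.filter (fun a => μucb a ≠ a),
        (sSup (C a (μucb a)) - sInf (C a (μucb a))) ≤ 0.1 * Δ) :
    μucb = μopt := by
  by_contra hne
  -- u ≤ v along any matching
  have hle : ∀ a a', u a a' ≤ v a a' := by
    intro a a'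
    by_cases h : a = a'
    · subst h; rw [hu, hvdiag]
    · rw [hv a a' h]
      exact le_csSup (hC a a').2.bddAbove (hmem a a')
  have h1 : ∑ a, u a (μopt a) ≤ ∑ a, v a (μopt a) :=
    Finset.sum_le_sum fun a _ => hle a (μopt a)
  have h2 := hucbmax μopt hopt
  -- ∑ v(μucb) - ∑ u(μucb) ≤ 0.1 Δ
  have h3 : ∑ a, v a (μucb a) - ∑ a, u a (μucb a) ≤ 0.1 * Δ := by
    rw [← Finset.sum_sub_distrib]
    have hz : ∀ a ∈ Finset.univ, a ∉ Finset.univ.filter (fun a => μucb a ≠ a) →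
        v a (μucb a) - u a (μucb a) = 0 := by
      intro a _ ha
      simp only [Finset.mem_filter, Finset.mem_univ, true_and, not_not] at ha
      rw [ha, hu, hvdiag]; ring
    rw [← Finset.sum_subset (Finset.filter_subset _ _) hz]
    refine le_trans (Finset.sum_le_sum ?_) hwidth
    intro a ha
    simp only [Finset.mem_filter, Finset.mem_univ, true_and] at ha
    have h1' : v a (μucb a) = sSup (C a (μucb a)) := hv a (μucb a) (fun h => ha h.symm)
    have h2' : sInf (C a (μucb a)) ≤ u a (μucb a) :=
      csInf_le (hC a (μucb a)).2.bddBelow (hmem a (μucb a))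
    linarith
  -- Δ ≤ gap
  have h4 : Δ ≤ ∑ a, u a (μopt a) - ∑ a, u a (μucb a) := by
    rw [hΔ]
    apply csInf_le
    · refine ⟨0, ?_⟩
      rintro x ⟨μ', hμ', hne', rfl⟩
      have := hunique μ' hμ' hne'
      linarith
    · exact ⟨μucb, hucb, hne, rfl⟩
  linarith
end

section
/- NTU Subset Instability is nonnegative, and it equals zero if and only if the matching X is stable in the non-transferable-utility sense. -/
open Finset

variable {A : Type*} [Fintype A] [DecidableEq A]

/-- NTU stability of a matching `μ`: individual rationality and no pair where both
agents strictly prefer each other. -/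
def NTUStable (Mkt : TwoSidedMarket A) (u : A → A → ℝ) (μ : A → A) : Prop :=
  (∀ a, 0 ≤ u a (μ a)) ∧
  (∀ m ∈ Mkt.M, ∀ w ∈ Mkt.W,
    min (u m w - u m (μ m)) (u w m - u w (μ w)) ≤ 0)

/-- NTU Subset Instability: minimum total nonnegative subsidy making the matching
individually rational and free of blocking pairs. -/
noncomputable def ntuInstability (Mkt : TwoSidedMarket A) (u : A → A → ℝ) (μ : A → A) : ℝ :=
  sInf {x | ∃ s : A → ℝ, (∀ a, 0 ≤ s a) ∧
    (∀ m ∈ Mkt.M, ∀ w ∈ Mkt.W,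
      min (u m w - u m (μ m) - s m) (u w m - u w (μ w) - s w) ≤ 0) ∧
    (∀ a, 0 ≤ u a (μ a) + s a) ∧ x = ∑ a, s a}

/-- NTU Subset Instability is nonnegative, and zero iff the matching is
NTU-stable. -/
theorem ntuInstability_nonneg_and_eq_zero_iff
    (Mkt : TwoSidedMarket A) (u : A → A → ℝ) (μ : A → A)
    (hu : ∀ a, u a a = 0)
    (hμ : IsMatchingOn Mkt Finset.univ μ) :
    0 ≤ ntuInstability Mkt u μ ∧
      (ntuInstability Mkt u μ = 0 ↔ NTUStable Mkt u μ) := by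
  set T : Set ℝ := {x | ∃ s : A → ℝ, (∀ a, 0 ≤ s a) ∧
    (∀ m ∈ Mkt.M, ∀ w ∈ Mkt.W,
      min (u m w - u m (μ m) - s m) (u w m - u w (μ w) - s w) ≤ 0) ∧
    (∀ a, 0 ≤ u a (μ a) + s a) ∧ x = ∑ a, s a} with hT
  have habs : ∀ x y : A, |u x y| ≤ ∑ p : A × A, |u p.1 p.2| := by
    intro x y
    exact Finset.single_le_sum (f := fun p : A × A => |u p.1 p.2|)
      (fun p _ => abs_nonneg _) (Finset.mem_univ (x, y))
  set S := ∑ p : A × A, |u p.1 p.2| with hS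
  have hTne : T.Nonempty := by
    refine ⟨∑ _a : A, (1 + 2 * S), fun _ => 1 + 2 * S, ?_, ?_, ?_, rfl⟩
    · intro a
      dsimp only
      have : 0 ≤ S := Finset.sum_nonneg fun p _ => abs_nonneg _
      linarith
    · intro m _ w _
      refine le_trans (min_le_left _ _) ?_
      dsimp only
      linarith [abs_le.mp (habs m w), abs_le.mp (habs m (μ m))]
    · intro a
      dsimp only
      linarith [abs_le.mp (habs a (μ a))]
  have hlb : ∀ x ∈ T, (0:ℝ) ≤ x := by
    rintro x ⟨s, hs, _, _, rfl⟩
    exact Finset.sum_nonneg fun a _ => hs a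
  have hbdd : BddBelow T := ⟨0, hlb⟩
  have hnn : 0 ≤ ntuInstability Mkt u μ := Real.sInf_nonneg hlb
  refine ⟨hnn, ?_, ?_⟩
  · -- sInf = 0 → stable
    intro h0
    by_contra hns
    unfold NTUStable at hns
    push_neg at hns
    have hpos : ∃ ε > 0, ∀ x ∈ T, ε ≤ x := by
      by_cases hIR : ∀ a, 0 ≤ u a (μ a)
      case neg =>
        push_neg at hIR
        obtain ⟨a, ha⟩ := hIR
        refine ⟨-(u a (μ a)), by linarith, ?_⟩
        rintro x ⟨s, hs, _, hir, rfl⟩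
        have h1 : -(u a (μ a)) ≤ s a := by have := hir a; linarith
        calc -(u a (μ a)) ≤ s a := h1
          _ ≤ ∑ b, s b := Finset.single_le_sum (fun b _ => hs b) (Finset.mem_univ a)
      case pos =>
        obtain ⟨m, hm, w, hw, hmw⟩ := hns hIR
        refine ⟨_, hmw, ?_⟩
        rintro x ⟨s, hs, hblk, _, rfl⟩
        have := hblk m hm w hw
        have hcases : min (u m w - u m (μ m)) (u w m - u w (μ w)) ≤ s m ∨
            min (u m w - u m (μ m)) (u w m - u w (μ w)) ≤ s w := by
          rcases min_le_iff.mp this with h' | h'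
          · left; linarith [min_le_left (u m w - u m (μ m)) (u w m - u w (μ w))]
          · right; linarith [min_le_right (u m w - u m (μ m)) (u w m - u w (μ w))]
        rcases hcases with h' | h'
        · exact h'.trans (Finset.single_le_sum (fun b _ => hs b) (Finset.mem_univ m))
        · exact h'.trans (Finset.single_le_sum (fun b _ => hs b) (Finset.mem_univ w))
    obtain ⟨ε, hε, hεlb⟩ := hpos
    have : ε ≤ ntuInstability Mkt u μ := le_csInf hTne hεlb
    rw [h0] at this
    linarith
  · -- stable → sInf = 0
    intro hst
    have h0T : (0:ℝ) ∈ T := by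
      refine ⟨fun _ => 0, fun _ => le_refl _, ?_, ?_, by simp⟩
      · intro m hm w hw
        simpa using hst.2 m hm w hw
      · intro a; simpa using hst.1 a
    exact le_antisymm (csInf_le hbdd h0T) hnn
end

section
/- NTU Subset Instability is Lipschitz in the utilities: for any matching X and utility functions u, ũ, |I^NTU(u, X) − I^NTU(ũ, X)| ≤ 2 · Σ_{a∈A} ‖u_a − ũ_a‖_∞. -/
open Finset

variable {A : Type*} [Fintype A] [DecidableEq A]

/-- The feasible set defining `ntuInstability` is nonempty. -/
lemma ntu_feasible_nonempty [Nonempty A] (Mkt : TwoSidedMarket A) (u : A → A → ℝ) (μ : A → A) :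
    {x | ∃ s : A → ℝ, (∀ a, 0 ≤ s a) ∧
      (∀ m ∈ Mkt.M, ∀ w ∈ Mkt.W,
        min (u m w - u m (μ m) - s m) (u w m - u w (μ w) - s w) ≤ 0) ∧
      (∀ a, 0 ≤ u a (μ a) + s a) ∧ x = ∑ a, s a}.Nonempty := by
  refine ⟨_, fun a => 2 * Finset.univ.sup' Finset.univ_nonempty (fun a' => |u a a'|),
    ?_, ?_, ?_, rfl⟩
  · intro a
    dsimp only
    have : |u a a| ≤ Finset.univ.sup' Finset.univ_nonempty (fun a' => |u a a'|) :=
      Finset.le_sup' (fun a' => |u a a'|) (Finset.mem_univ a)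
    have := abs_nonneg (u a a)
    linarith
  · intro m _ w _
    dsimp only
    have h1 : |u m w| ≤ Finset.univ.sup' Finset.univ_nonempty (fun a' => |u m a'|) :=
      Finset.le_sup' (fun a' => |u m a'|) (Finset.mem_univ w)
    have h2 : |u m (μ m)| ≤ Finset.univ.sup' Finset.univ_nonempty (fun a' => |u m a'|) :=
      Finset.le_sup' (fun a' => |u m a'|) (Finset.mem_univ (μ m))
    refine min_le_of_left_le ?_
    have := le_abs_self (u m w)
    have := neg_abs_le (u m (μ m))
    linarith
  · intro a
    dsimp only
    have h2 : |u a (μ a)| ≤ Finset.univ.sup' Finset.univ_nonempty (fun a' => |u a a'|) :=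
      Finset.le_sup' (fun a' => |u a a'|) (Finset.mem_univ (μ a))
    have := neg_abs_le (u a (μ a))
    have := abs_nonneg (u a (μ a))
    linarith

/-- The feasible set defining `ntuInstability` is bounded below (by `0`). -/
lemma ntu_feasible_bddBelow (Mkt : TwoSidedMarket A) (u : A → A → ℝ) (μ : A → A) :
    BddBelow {x | ∃ s : A → ℝ, (∀ a, 0 ≤ s a) ∧
      (∀ m ∈ Mkt.M, ∀ w ∈ Mkt.W,
        min (u m w - u m (μ m) - s m) (u w m - u w (μ w) - s w) ≤ 0) ∧
      (∀ a, 0 ≤ u a (μ a) + s a) ∧ x = ∑ a, s a} := by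
  refine ⟨0, ?_⟩
  rintro x ⟨s, hs0, _, _, rfl⟩
  exact Finset.sum_nonneg fun a _ => hs0 a

/-- One-sided Lipschitz bound for `ntuInstability`. -/
lemma ntu_aux [Nonempty A] (Mkt : TwoSidedMarket A) (u v : A → A → ℝ) (μ : A → A)
    (D : A → ℝ) (hDle : ∀ a b, |u a b - v a b| ≤ D a) :
    ntuInstability Mkt u μ ≤ ntuInstability Mkt v μ + 2 * ∑ a, D a := by
  have hD0 : ∀ a, 0 ≤ D a := fun a => le_trans (abs_nonneg _) (hDle a a)
  have huv : ∀ a b, u a b - v a b ≤ D a := fun a b => le_trans (le_abs_self _) (hDle a b)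
  have hvu : ∀ a b, v a b - u a b ≤ D a := fun a b =>
    le_trans (le_abs_self _) (by rw [abs_sub_comm]; exact hDle a b)
  unfold ntuInstability
  rw [← sub_le_iff_le_add]
  apply le_csInf (ntu_feasible_nonempty Mkt v μ)
  rintro x ⟨s, hs0, hblock, hIR, rfl⟩
  rw [sub_le_iff_le_add]
  have hmem : (∑ a, (s a + 2 * D a)) ∈ {x | ∃ s : A → ℝ, (∀ a, 0 ≤ s a) ∧
      (∀ m ∈ Mkt.M, ∀ w ∈ Mkt.W,
        min (u m w - u m (μ m) - s m) (u w m - u w (μ w) - s w) ≤ 0) ∧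
      (∀ a, 0 ≤ u a (μ a) + s a) ∧ x = ∑ a, s a} := by
    refine ⟨fun a => s a + 2 * D a, ?_, ?_, ?_, rfl⟩
    · intro a; dsimp only; have := hs0 a; have := hD0 a; linarith
    · intro m hm w hw
      rcases min_le_iff.mp (hblock m hm w hw) with h | h
      · refine min_le_of_left_le ?_
        dsimp only
        have := huv m w
        have := hvu m (μ m)
        linarith
      · refine min_le_of_right_le ?_
        dsimp only
        have := huv w m
        have := hvu w (μ w)
        linarith
    · intro a
      dsimp only
      have := hIR a
      have := hvu a (μ a)
      have := hD0 a
      linarith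
  have := csInf_le (ntu_feasible_bddBelow Mkt u μ) hmem
  calc sInf _ ≤ ∑ a, (s a + 2 * D a) := this
    _ = (∑ a, s a) + 2 * ∑ a, D a := by
        rw [Finset.sum_add_distrib, ← Finset.mul_sum]

/-- NTU Subset Instability is Lipschitz in the utilities. -/
theorem ntuInstability_lipschitz [Nonempty A]
    (Mkt : TwoSidedMarket A) (u v : A → A → ℝ) (μ : A → A)
    (hu : ∀ a, u a a = 0) (hv : ∀ a, v a a = 0)
    (hμ : IsMatchingOn Mkt Finset.univ μ) :
    |ntuInstability Mkt u μ - ntuInstability Mkt v μ| ≤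
      2 * ∑ a, Finset.univ.sup' Finset.univ_nonempty (fun a' => |u a a' - v a a'|) := by
  set D : A → ℝ := fun a => Finset.univ.sup' Finset.univ_nonempty (fun a' => |u a a' - v a a'|)
    with hD
  have hDle : ∀ a b, |u a b - v a b| ≤ D a := fun a b => Finset.le_sup' (fun a' => |u a a' - v a a'|) (Finset.mem_univ b)
  have hDle' : ∀ a b, |v a b - u a b| ≤ D a := fun a b => by
    rw [abs_sub_comm]; exact hDle a b
  have h1 := ntu_aux Mkt u v μ D hDle
  have h2 := ntu_aux Mkt v u μ D hDle'
  rw [abs_sub_le_iff]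
  constructor <;> linarith
end

section
/- NTU confidence-set lemma: suppose each confidence interval C_{a,a'} contains the true utility u(a,a'), and let u^UCB(a,a') = max C_{a,a'}. If the matching X^UCB is NTU-stable with respect to u^UCB, then I^NTU(u, X^UCB) ≤ Σ_{a∈A, μ_{X^UCB}(a)≠a} (max C_{a,μ_{X^UCB}(a)} − min C_{a,μ_{X^UCB}(a)}). -/
open Finset

variable {A : Type*} [Fintype A] [DecidableEq A]

/-- if confidence sets contain the true utilities and the matching is
NTU-stable with respect to the UCB utilities, then the true NTU Subset Instability is
at most the total width of the confidence sets along the matching. -/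
theorem ntuInstability_le_confidence_widths
    (Mkt : TwoSidedMarket A) (u v : A → A → ℝ) (μ : A → A)
    (C : A → A → Set ℝ)
    (hC : ∀ a a', (C a a').Nonempty ∧ IsCompact (C a a'))
    (hmem : ∀ a a', u a a' ∈ C a a')
    (hu : ∀ a, u a a = 0)
    (hv : ∀ a a', a ≠ a' → v a a' = sSup (C a a'))
    (hvdiag : ∀ a, v a a = 0)
    (hμ : IsMatchingOn Mkt Finset.univ μ)
    (hstable : NTUStable Mkt v μ) :
    ntuInstability Mkt u μ ≤
      ∑ a ∈ Finset.univ.filter (fun a => μ a ≠ a),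
        (sSup (C a (μ a)) - sInf (C a (μ a))) := by
  classical
  set s : A → ℝ := fun a => if μ a ≠ a then sSup (C a (μ a)) - u a (μ a) else 0 with hs
  have hle : ∀ a a', u a a' ≤ sSup (C a a') := fun a a' =>
    le_csSup (hC a a').2.bddAbove (hmem a a')
  have hge : ∀ a a', sInf (C a a') ≤ u a a' := fun a a' =>
    csInf_le (hC a a').2.bddBelow (hmem a a')
  have hsnn : ∀ a, 0 ≤ s a := by
    intro a
    simp only [hs]
    split
    · linarith [hle a (μ a)]
    · exact le_refl 0
  -- key identity: u a (μ a) + s a = v a (μ a)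
  have hkey : ∀ a, u a (μ a) + s a = v a (μ a) := by
    intro a
    simp only [hs]
    by_cases h : μ a = a
    · simp [h, hu a, hvdiag a]
    · rw [if_pos h, hv a (μ a) (fun he => h he.symm)]
      ring
  have hne : ∀ m ∈ Mkt.M, ∀ w ∈ Mkt.W, m ≠ w := by
    intro m hm w hw he
    exact (Finset.disjoint_left.mp Mkt.disj hm) (he ▸ hw)
  have hblock : ∀ m ∈ Mkt.M, ∀ w ∈ Mkt.W,
      min (u m w - u m (μ m) - s m) (u w m - u w (μ w) - s w) ≤ 0 := by
    intro m hm w hw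
    have h1 : u m w - u m (μ m) - s m ≤ v m w - v m (μ m) := by
      rw [hv m w (hne m hm w hw)]
      have := hkey m
      linarith [hle m w]
    have h2 : u w m - u w (μ w) - s w ≤ v w m - v w (μ w) := by
      rw [hv w m (Ne.symm (hne m hm w hw))]
      have := hkey w
      linarith [hle w m]
    calc min (u m w - u m (μ m) - s m) (u w m - u w (μ w) - s w)
        ≤ min (v m w - v m (μ m)) (v w m - v w (μ w)) := min_le_min h1 h2
      _ ≤ 0 := hstable.2 m hm w hw
  have hir : ∀ a, 0 ≤ u a (μ a) + s a := by
    intro a; rw [hkey a]; exact hstable.1 a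
  have hmem' : (∑ a, s a) ∈ {x | ∃ s : A → ℝ, (∀ a, 0 ≤ s a) ∧
      (∀ m ∈ Mkt.M, ∀ w ∈ Mkt.W,
        min (u m w - u m (μ m) - s m) (u w m - u w (μ w) - s w) ≤ 0) ∧
      (∀ a, 0 ≤ u a (μ a) + s a) ∧ x = ∑ a, s a} :=
    ⟨s, hsnn, hblock, hir, rfl⟩
  have hbdd : BddBelow {x | ∃ s : A → ℝ, (∀ a, 0 ≤ s a) ∧
      (∀ m ∈ Mkt.M, ∀ w ∈ Mkt.W,
        min (u m w - u m (μ m) - s m) (u w m - u w (μ w) - s w) ≤ 0) ∧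
      (∀ a, 0 ≤ u a (μ a) + s a) ∧ x = ∑ a, s a} := by
    refine ⟨0, ?_⟩
    rintro x ⟨s', hs', -, -, rfl⟩
    exact Finset.sum_nonneg fun a _ => hs' a
  have h1 : ntuInstability Mkt u μ ≤ ∑ a, s a := csInf_le hbdd hmem'
  have h2 : ∑ a, s a ≤ ∑ a ∈ Finset.univ.filter (fun a => μ a ≠ a),
      (sSup (C a (μ a)) - sInf (C a (μ a))) := by
    rw [show (∑ a, s a) = ∑ a ∈ Finset.univ.filter (fun a => μ a ≠ a),
        (sSup (C a (μ a)) - u a (μ a)) from (Finset.sum_filter _ _).symm]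
    exact Finset.sum_le_sum fun a _ => by linarith [hge a (μ a)]
  linarith
end

section
/- Search-frictions stability: suppose confidence sets contain the true utilities and (X, τ*) is stable with respect to u^UCB (upper endpoints). Define shifted transfers τ'_a = τ*_a + (max C_{a,μ_X(a)} − min C_{a,μ_X(a)}) for matched a. Then (X, τ') is stable with respect to the true utilities u; consequently, for any ε ≥ 0, the transfers τ_a = τ'_a − ε form an ε-stable outcome, i.e., u_a(μ_X(a)) + τ_a ≥ −ε for all a and u_m(w) + u_w(m) − 2ε ≤ (u_m(μ_X(m)) + τ_m) + (u_w(μ_X(w)) + τ_w) for all (m,w). -/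
open Finset

variable {A : Type*} [Fintype A] [DecidableEq A]

/-- shifting the UCB-stable transfers up by the confidence widths gives an
outcome stable for the true utilities; subtracting `ε` then gives an `ε`-stable outcome. -/
theorem search_frictions_stability
    (Mkt : TwoSidedMarket A) (u v : A → A → ℝ) (μ : A → A) (τstar : A → ℝ)
    (C : A → A → Set ℝ)
    (hC : ∀ a a', (C a a').Nonempty ∧ IsCompact (C a a'))
    (hmem : ∀ a a', u a a' ∈ C a a')
    (hu : ∀ a, u a a = 0)
    (hv : ∀ a a', a ≠ a' → v a a' = sSup (C a a'))
    (hvdiag : ∀ a, v a a = 0)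
    (hμ : IsMatchingOn Mkt Finset.univ μ)
    (hτ0 : ∀ a, μ a = a → τstar a = 0)
    (hstable : Stable Mkt v μ τstar)
    (τ' : A → ℝ)
    (hτ' : ∀ a, τ' a = if μ a = a then 0
      else τstar a + (sSup (C a (μ a)) - sInf (C a (μ a)))) :
    Stable Mkt u μ τ' ∧
      ∀ ε : ℝ, 0 ≤ ε →
        (∀ a, -ε ≤ u a (μ a) + (τ' a - ε)) ∧
        (∀ m ∈ Mkt.M, ∀ w ∈ Mkt.W,
          u m w + u w m - 2 * ε ≤
            (u m (μ m) + (τ' m - ε)) + (u w (μ w) + (τ' w - ε))) := by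
  have key : ∀ a, v a (μ a) + τstar a ≤ u a (μ a) + τ' a := by
    intro a
    rcases eq_or_ne (μ a) a with h | h
    · rw [hτ' a, if_pos h, h, hvdiag, hu, hτ0 a h]
    · rw [hτ' a, if_neg h, hv a (μ a) (Ne.symm h)]
      have hlo : sInf (C a (μ a)) ≤ u a (μ a) :=
        csInf_le (hC a (μ a)).2.bddBelow (hmem a (μ a))
      linarith
  have hstab : Stable Mkt u μ τ' := by
    constructor
    · intro a
      have := hstable.1 a
      have := key a
      linarith
    · intro m hm w hw
      have hmw : m ≠ w := by
        intro he; subst he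
        exact Finset.disjoint_left.mp Mkt.disj hm hw
      have h1 : u m w ≤ v m w := by
        rw [hv m w hmw]
        exact le_csSup (hC m w).2.bddAbove (hmem m w)
      have h2 : u w m ≤ v w m := by
        rw [hv w m hmw.symm]
        exact le_csSup (hC w m).2.bddAbove (hmem w m)
      have h3 := hstable.2 m hm w hw
      have := key m
      have := key w
      linarith
  refine ⟨hstab, fun ε hε => ⟨fun a => ?_, fun m hm w hw => ?_⟩⟩
  · have := hstab.1 a; linarith
  · have := hstab.2 m hm w hw; linarith
end
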